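/- Let T : X ⇉ X* be maximal monotone and suppose some h ∈ F_T satisfies the auxiliary condition: for every (x₀,x₀*) ∈ X × X*, inf_{(x,x*)∈X×X*} ( h_{(x₀,x₀*)}(x,x*) + ½‖x‖² + ½‖x*‖² ) = 0. Then every g ∈ F_T satisfies the same auxiliary condition: for every (x₀,x₀*) ∈ X × X*, inf_{(x,x*)∈X×X*} ( g_{(x₀,x₀*)}(x,x*) + ½‖x‖² + ½‖x*‖² ) = 0. -/

import Mathlib

noncomputable section

open NormedSpace

/-- The translate `h_{(x₀,x₀*)}` of a function on `X × X*`. -/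
def transl {X : Type*} [NormedAddCommGroup X] [NormedSpace ℝ X]
    (h : X × (X →L[ℝ] ℝ) → EReal) (w : X × (X →L[ℝ] ℝ)) :
    X × (X →L[ℝ] ℝ) → EReal :=
  fun p => h (p.1 + w.1, p.2 + w.2) - ((w.2 p.1 + p.2 w.1 + w.2 w.1 : ℝ) : EReal)

/-- The translate of a function on `X* × X**`. -/
def translD {X : Type*} [NormedAddCommGroup X] [NormedSpace ℝ X]
    (g : (X →L[ℝ] ℝ) × ((X →L[ℝ] ℝ) →L[ℝ] ℝ) → EReal)
    (v : (X →L[ℝ] ℝ) × ((X →L[ℝ] ℝ) →L[ℝ] ℝ)) :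
    (X →L[ℝ] ℝ) × ((X →L[ℝ] ℝ) →L[ℝ] ℝ) → EReal :=
  fun q => g (q.1 + v.1, q.2 + v.2) - ((v.2 q.1 + q.2 v.1 + v.2 v.1 : ℝ) : EReal)

/-- The conjugate `h* : X* × X** → ℝ ∪ {±∞}`,
`h*(x*,x**) = sup_{(y,y*)} ⟨y,x*⟩ + ⟨y*,x**⟩ − h(y,y*)`. -/
def conj {X : Type*} [NormedAddCommGroup X] [NormedSpace ℝ X]
    (h : X × (X →L[ℝ] ℝ) → EReal) :
    (X →L[ℝ] ℝ) × ((X →L[ℝ] ℝ) →L[ℝ] ℝ) → EReal :=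
  fun q => ⨆ p : X × (X →L[ℝ] ℝ), (((q.1 p.1 + q.2 p.2 : ℝ) : EReal) - h p)

/-- Convexity of an `EReal`-valued function. -/
def ConvexE {X : Type*} [NormedAddCommGroup X] [NormedSpace ℝ X]
    (h : X × (X →L[ℝ] ℝ) → EReal) : Prop :=
  ∀ p q : X × (X →L[ℝ] ℝ), ∀ a b : ℝ, 0 ≤ a → 0 ≤ b → a + b = 1 →
    h (a • p + b • q) ≤ (a : EReal) * h p + (b : EReal) * h q

/-- The auxiliary condition:
`inf_{(x,x*)} h_{(x₀,x₀*)}(x,x*) + ½‖x‖² + ½‖x*‖² = 0` for all `(x₀,x₀*)`. -/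
def AuxCond {X : Type*} [NormedAddCommGroup X] [NormedSpace ℝ X]
    (h : X × (X →L[ℝ] ℝ) → EReal) : Prop :=
  ∀ w : X × (X →L[ℝ] ℝ),
    (⨅ p : X × (X →L[ℝ] ℝ),
      (transl h w p + ((‖p.1‖ ^ 2 / 2 + ‖p.2‖ ^ 2 / 2 : ℝ) : EReal))) = 0

/-- Monotone operator (identified with its graph). -/
def MonotoneSet {X : Type*} [NormedAddCommGroup X] [NormedSpace ℝ X]
    (T : Set (X × (X →L[ℝ] ℝ))) : Prop :=
  ∀ p ∈ T, ∀ q ∈ T, 0 ≤ (p.2 - q.2) (p.1 - q.1)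

/-- Maximal monotone operator. -/
def MaximalMonotone {X : Type*} [NormedAddCommGroup X] [NormedSpace ℝ X]
    (T : Set (X × (X →L[ℝ] ℝ))) : Prop :=
  MonotoneSet T ∧ ∀ S : Set (X × (X →L[ℝ] ℝ)), MonotoneSet S → T ⊆ S → S = T

/-- The Fitzpatrick family of `T`. -/
def FitzFamily {X : Type*} [NormedAddCommGroup X] [NormedSpace ℝ X]
    (T : Set (X × (X →L[ℝ] ℝ))) : Set (X × (X →L[ℝ] ℝ) → EReal) :=
  {h | ConvexE h ∧ LowerSemicontinuous h ∧
      (∀ p : X × (X →L[ℝ] ℝ), (p.2 p.1 : EReal) ≤ h p) ∧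
      ∀ p ∈ T, h p = (p.2 p.1 : EReal)}

/-- `T` is of type (NI): `inf_{(y,y*)∈T} ⟨x*−y*, x**−Jy⟩ ≤ 0` for all `(x*,x**)`. -/
def TypeNI {X : Type*} [NormedAddCommGroup X] [NormedSpace ℝ X]
    (T : Set (X × (X →L[ℝ] ℝ))) : Prop :=
  ∀ q : (X →L[ℝ] ℝ) × ((X →L[ℝ] ℝ) →L[ℝ] ℝ),
    (⨅ p : T, (((q.2 - inclusionInDoubleDual ℝ X p.1.1) (q.1 - p.1.2) : ℝ) : EReal)) ≤ 0


namespace Stmt8Helpers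

variable {X : Type*} [NormedAddCommGroup X] [NormedSpace ℝ X]


/-! ### EReal helper lemmas -/

theorem esub_coe (x : EReal) (a : ℝ) : x - (a:EReal) = x + ((-a : ℝ) : EReal) := by
  rw [sub_eq_add_neg, EReal.coe_neg]

theorem eadd_coe_cancel (x : EReal) (a : ℝ) : x + (a : EReal) + ((-a : ℝ) : EReal) = x := by
  rw [add_assoc, ← EReal.coe_add]; simp

theorem ecoe_le_of_forall {k : ℝ} {x : EReal} (h : ∀ ε : ℝ, 0 < ε → (↑(k - ε) : EReal) ≤ x) :
    (k : EReal) ≤ x := by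
  induction x using EReal.rec with
  | bot => exact absurd (le_bot_iff.1 (h 1 one_pos)) (EReal.coe_ne_bot _)
  | coe r =>
    have h2 : ∀ ε : ℝ, 0 < ε → k - ε ≤ r := fun ε hε => EReal.coe_le_coe_iff.1 (h ε hε)
    refine EReal.coe_le_coe_iff.2 ?_
    by_contra hc; push_neg at hc
    have := h2 ((k - r)/2) (by linarith); linarith
  | top => exact le_top

theorem ele_zero_of_forall {x : EReal} (h : ∀ ε : ℝ, 0 < ε → x ≤ (ε : EReal)) : x ≤ 0 := by
  induction x using EReal.rec with
  | bot => exact bot_le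
  | coe r =>
    have h2 : ∀ ε : ℝ, 0 < ε → r ≤ ε := fun ε hε => EReal.coe_le_coe_iff.1 (h ε hε)
    have : r ≤ 0 := by by_contra hc; push_neg at hc; have := h2 (r/2) (by linarith); linarith
    exact_mod_cast this
  | top => exact absurd (top_le_iff.1 (h 1 one_pos)) (EReal.coe_ne_top _)

theorem esub_sub_coe (x : EReal) (hx : x ≠ ⊥) (u v : ℝ) :
    x - (u : EReal) = (x - (v:EReal)) + ((v - u : ℝ) : EReal) := by
  induction x using EReal.rec with
  | bot => simp at hx
  | coe r =>
    rw [← EReal.coe_sub, ← EReal.coe_sub, ← EReal.coe_add]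
    exact congrArg _ (by ring)
  | top => rw [EReal.top_sub_coe, EReal.top_sub_coe, EReal.top_add_coe]

theorem emul_coe_add {a : ℝ} (ha : 0 ≤ a) (x : EReal) (hx : x ≠ ⊥) (r : ℝ) :
    (a : EReal) * (x + (r : EReal)) = (a : EReal) * x + ((a * r : ℝ) : EReal) := by
  rcases ha.eq_or_lt with h0 | hpos
  · simp [← h0]
  · induction x using EReal.rec with
    | bot => simp at hx
    | coe s =>
      rw [← EReal.coe_add, ← EReal.coe_mul, ← EReal.coe_mul, ← EReal.coe_add]
      exact congrArg _ (by ring)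
    | top => rw [EReal.top_add_coe, EReal.coe_mul_top_of_pos hpos, EReal.top_add_coe]

theorem esub_le_esub_right {x y : EReal} (h : x ≤ y) (a : ℝ) :
    x - (a:EReal) ≤ y - (a:EReal) := by
  rw [sub_eq_add_neg, sub_eq_add_neg]; exact add_le_add_left h _

theorem esub_coe_le_coe {x : EReal} {a b : ℝ} (h : x - (a:EReal) ≤ (b:EReal)) :
    x ≤ ((b + a : ℝ) : EReal) := by
  have h2 := add_le_add_left h ((a:ℝ) : EReal)
  rw [sub_eq_add_neg, ← EReal.coe_neg, add_assoc, ← EReal.coe_add, neg_add_cancel, EReal.coe_zero,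
    add_zero, ← EReal.coe_add] at h2
  exact h2

theorem ne_bot_of_coe_le {x : EReal} {a : ℝ} (h : (a : EReal) ≤ x) : x ≠ ⊥ := by
  intro hb; rw [hb, le_bot_iff] at h; exact EReal.coe_ne_bot _ h



/-- The duality coupling. -/
def cpl (p : X × (X →L[ℝ] ℝ)) : ℝ := p.2 p.1

/-- The quadratic penalty. -/
def jj (p : X × (X →L[ℝ] ℝ)) : ℝ := ‖p.1‖ ^ 2 / 2 + ‖p.2‖ ^ 2 / 2

theorem cpl_def (p : X × (X →L[ℝ] ℝ)) : cpl p = p.2 p.1 := rfl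

theorem cpl_abs_le (p : X × (X →L[ℝ] ℝ)) : |cpl p| ≤ ‖p.2‖ * ‖p.1‖ := by
  simpa [cpl, Real.norm_eq_abs] using p.2.le_opNorm p.1

theorem cj_nonneg (p : X × (X →L[ℝ] ℝ)) : 0 ≤ cpl p + jj p := by
  have h1 := (abs_le.1 (cpl_abs_le p)).1
  have h2 : 0 ≤ (‖p.1‖ - ‖p.2‖)^2 := sq_nonneg _
  unfold jj; nlinarith [norm_nonneg p.1, norm_nonneg p.2]

theorem cpl_shift (p w : X × (X →L[ℝ] ℝ)) :
    cpl (p.1 + w.1, p.2 + w.2) - (w.2 p.1 + p.2 w.1 + w.2 w.1) = cpl p := by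
  simp [cpl, ContinuousLinearMap.add_apply, map_add]; ring

theorem transl_ge {h : X × (X →L[ℝ] ℝ) → EReal} (hge : ∀ p, (cpl p : EReal) ≤ h p)
    (w p : X × (X →L[ℝ] ℝ)) : (cpl p : EReal) ≤ transl h w p := by
  have h1 := hge (p.1 + w.1, p.2 + w.2)
  have h2 : (cpl p : EReal)
      = (cpl (p.1+w.1,p.2+w.2) : EReal) - ((w.2 p.1 + p.2 w.1 + w.2 w.1 : ℝ) : EReal) := by
    rw [← EReal.coe_sub, cpl_shift]
  rw [transl, h2]
  exact esub_le_esub_right h1 _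

theorem transl_at_pt {g : X × (X →L[ℝ] ℝ) → EReal} (t w : X × (X →L[ℝ] ℝ))
    (hgt : g t = (cpl t : EReal)) :
    transl g w (t.1 - w.1, t.2 - w.2) = (cpl (t.1 - w.1, t.2 - w.2) : EReal) := by
  have e1 : t.1 - w.1 + w.1 = t.1 := sub_add_cancel t.1 w.1
  have e2 : t.2 - w.2 + w.2 = t.2 := sub_add_cancel t.2 w.2
  rw [transl]
  simp only [e1, e2]
  rw [hgt, ← EReal.coe_sub]
  exact congrArg _ (by
    simp [cpl, map_sub, ContinuousLinearMap.sub_apply]; ring)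

/-- The gap function `h - c`. -/
def egap (h : X × (X →L[ℝ] ℝ) → EReal) (v : X × (X →L[ℝ] ℝ)) : EReal := h v - (cpl v : EReal)

theorem transl_egap {h : X × (X →L[ℝ] ℝ) → EReal} (hge : ∀ p, (cpl p : EReal) ≤ h p)
    (w p : X × (X →L[ℝ] ℝ)) :
    transl h w p = egap h (p.1 + w.1, p.2 + w.2) + (cpl p : EReal) := by
  have hnb : h (p.1+w.1, p.2+w.2) ≠ ⊥ := ne_bot_of_coe_le (hge _)
  rw [transl, egap, esub_sub_coe _ hnb _ (cpl (p.1+w.1, p.2+w.2)), cpl_shift]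

theorem transl_zero {h : X × (X →L[ℝ] ℝ) → EReal} (w : X × (X →L[ℝ] ℝ)) :
    transl h w 0 = egap h w := by
  rw [transl, egap]
  simp [cpl]

theorem value_extract {h : X × (X →L[ℝ] ℝ) → EReal} (hge : ∀ p, (cpl p : EReal) ≤ h p)
    {w p : X × (X →L[ℝ] ℝ)} {r : ℝ}
    (hlt : transl h w p + (jj p : EReal) < (r : EReal)) :
    ∃ V : ℝ, transl h w p = (V : EReal) ∧ cpl p ≤ V ∧ V + jj p < r := by
  have hlb : (cpl p : EReal) ≤ transl h w p := transl_ge hge w p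
  have hnb : transl h w p ≠ ⊥ := ne_bot_of_coe_le hlb
  have hnt : transl h w p ≠ ⊤ := by
    intro ht; rw [ht, EReal.top_add_coe] at hlt; exact (not_top_lt hlt)
  refine ⟨(transl h w p).toReal, (EReal.coe_toReal hnt hnb).symm, ?_, ?_⟩
  · exact EReal.coe_le_coe_iff.1 (by rw [EReal.coe_toReal hnt hnb]; exact hlb)
  · have : ((transl h w p).toReal : EReal) + (jj p : EReal) < (r : EReal) := by
      rw [EReal.coe_toReal hnt hnb]; exact hlt
    rw [← EReal.coe_add] at this
    exact_mod_cast this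


theorem convexE_transl {h : X × (X →L[ℝ] ℝ) → EReal} (hc : ConvexE h)
    (hge : ∀ p, (cpl p : EReal) ≤ h p) (w : X × (X →L[ℝ] ℝ)) : ConvexE (transl h w) := by
  intro p q a b ha hb hab
  set pw : X × (X →L[ℝ] ℝ) := (p.1 + w.1, p.2 + w.2) with hpw
  set qw : X × (X →L[ℝ] ℝ) := (q.1 + w.1, q.2 + w.2) with hqw
  have harg : ((a • p + b • q).1 + w.1, (a • p + b • q).2 + w.2) = a • pw + b • qw := by
    have hw1 : w.1 = a • w.1 + b • w.1 := by rw [← add_smul, hab, one_smul]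
    have hw2 : w.2 = a • w.2 + b • w.2 := by rw [← add_smul, hab, one_smul]
    refine Prod.ext ?_ ?_
    · show (a • p + b • q).1 + w.1 = (a • pw + b • qw).1
      simp only [Prod.fst_add, Prod.smul_fst, hpw, hqw]
      calc a • p.1 + b • q.1 + w.1 = a • p.1 + b • q.1 + (a • w.1 + b • w.1) := by rw [← hw1]
        _ = a • (p.1 + w.1) + b • (q.1 + w.1) := by rw [smul_add, smul_add]; abel
    · show (a • p + b • q).2 + w.2 = (a • pw + b • qw).2
      simp only [Prod.snd_add, Prod.smul_snd, hpw, hqw]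
      calc a • p.2 + b • q.2 + w.2 = a • p.2 + b • q.2 + (a • w.2 + b • w.2) := by rw [← hw2]
        _ = a • (p.2 + w.2) + b • (q.2 + w.2) := by rw [smul_add, smul_add]; abel
  have h1 := hc pw qw a b ha hb hab
  set lp : ℝ := w.2 p.1 + p.2 w.1 + w.2 w.1 with hlp
  set lq : ℝ := w.2 q.1 + q.2 w.1 + w.2 w.1 with hlq
  have hl : w.2 (a•p+b•q).1 + (a•p+b•q).2 w.1 + w.2 w.1 = a * lp + b * lq := by
    simp only [Prod.fst_add, Prod.snd_add, Prod.smul_fst, Prod.smul_snd, map_add, map_smul,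
      ContinuousLinearMap.add_apply, ContinuousLinearMap.smul_apply, smul_eq_mul, hlp, hlq]
    linear_combination (w.2 w.1) * hab.symm
  have hnbp : h pw ≠ ⊥ := ne_bot_of_coe_le (hge pw)
  have hnbq : h qw ≠ ⊥ := ne_bot_of_coe_le (hge qw)
  calc transl h w (a•p+b•q)
      = h (a•pw+b•qw) - ((a*lp + b*lq : ℝ) : EReal) := by rw [transl, harg, hl]
    _ ≤ ((a:EReal) * h pw + (b:EReal) * h qw) - ((a*lp+b*lq : ℝ) : EReal) :=
        esub_le_esub_right h1 _
    _ = ((a:EReal) * h pw + ((a * -lp : ℝ) : EReal)) + ((b:EReal) * h qw + ((b * -lq : ℝ) : EReal)) := by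
        rw [esub_coe, show (-(a*lp+b*lq)) = a * -lp + (b * -lq) by ring, EReal.coe_add]
        abel
    _ = (a:EReal) * (h pw + ((-lp : ℝ) : EReal)) + (b:EReal) * (h qw + ((-lq : ℝ) : EReal)) := by
        rw [emul_coe_add ha _ hnbp, emul_coe_add hb _ hnbq]
    _ = (a : EReal) * transl h w p + (b : EReal) * transl h w q := by
        rw [transl, transl, esub_coe, esub_coe]

theorem aux_points {h : X × (X →L[ℝ] ℝ) → EReal} (haux : AuxCond h) (w : X × (X →L[ℝ] ℝ))
    {ε : ℝ} (hε : 0 < ε) :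
    ∃ p, transl h w p + (jj p : EReal) < (ε : EReal) := by
  by_contra hcon; push_neg at hcon
  have hle : (ε : EReal) ≤ ⨅ p : X × (X →L[ℝ] ℝ),
      (transl h w p + ((‖p.1‖ ^ 2 / 2 + ‖p.2‖ ^ 2 / 2 : ℝ) : EReal)) :=
    le_iInf fun p => by simpa [jj] using hcon p
  rw [haux w] at hle
  have : ε ≤ 0 := by exact_mod_cast hle
  linarith

theorem rel_of_eq {h : X × (X →L[ℝ] ℝ) → EReal} (hc : ConvexE h)
    (hge : ∀ p, (cpl p : EReal) ≤ h p) {z t : X × (X →L[ℝ] ℝ)}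
    (hz : h z = (cpl z : EReal)) (ht : h t = (cpl t : EReal)) :
    0 ≤ (z.2 - t.2) (z.1 - t.1) := by
  have h1 := hc t z (1/2) (1/2) (by norm_num) (by norm_num) (by norm_num)
  rw [hz, ht] at h1
  have h2 := (hge _).trans h1
  rw [← EReal.coe_mul, ← EReal.coe_mul, ← EReal.coe_add] at h2
  have h3 : cpl ((1/2 : ℝ) • t + (1/2:ℝ) • z) ≤ 1/2 * cpl t + 1/2 * cpl z :=
    EReal.coe_le_coe_iff.1 h2
  simp only [cpl, Prod.fst_add, Prod.snd_add, Prod.smul_fst, Prod.smul_snd,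
    ContinuousLinearMap.add_apply, ContinuousLinearMap.smul_apply, map_add, map_smul,
    smul_eq_mul] at h3
  simp only [ContinuousLinearMap.sub_apply, map_sub]
  nlinarith [h3]

theorem mem_of_touch {T : Set (X × (X →L[ℝ] ℝ))} (hT : MaximalMonotone T)
    {h : X × (X →L[ℝ] ℝ) → EReal} (hc : ConvexE h) (hge : ∀ p, (cpl p : EReal) ≤ h p)
    (hhT : ∀ t ∈ T, h t = (cpl t : EReal)) {z : X × (X →L[ℝ] ℝ)}
    (hz : h z = (cpl z : EReal)) : z ∈ T := by
  have hmono : MonotoneSet (insert z T) := by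
    intro p hp q hq
    rcases hp with rfl | hpT <;> rcases hq with rfl | hqT
    · simp
    · exact rel_of_eq hc hge hz (hhT q hqT)
    · have h1 := rel_of_eq hc hge hz (hhT p hpT)
      simp only [ContinuousLinearMap.sub_apply, map_sub] at h1 ⊢
      linarith
    · exact hT.1 p hpT q hqT
  have heq := hT.2 _ hmono (Set.subset_insert _ _)
  rw [← heq]; exact Set.mem_insert _ _

theorem T_nonempty {T : Set (X × (X →L[ℝ] ℝ))} (hT : MaximalMonotone T) : T.Nonempty := by
  by_contra hne
  rw [Set.not_nonempty_iff_eq_empty] at hne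
  have hmono : MonotoneSet ({((0:X),(0:X →L[ℝ] ℝ))} : Set (X × (X →L[ℝ] ℝ))) := by
    intro p hp q hq
    rw [Set.mem_singleton_iff] at hp hq
    subst hp; subst hq; simp
  have heq := hT.2 _ hmono (by rw [hne]; exact Set.empty_subset _)
  rw [hne] at heq
  exact (Set.singleton_ne_empty _) heq

/-- Approximate attainment of the dual norm-squared supremum. -/
theorem normsup {E : Type*} [NormedAddCommGroup E] [NormedSpace ℝ E] (ψ : E →L[ℝ] ℝ)
    {ε : ℝ} (hε : 0 < ε) : ∃ a : E, ‖ψ‖^2/2 - ε ≤ ψ a - ‖a‖^2/2 := by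
  rcases eq_or_lt_of_le (norm_nonneg ψ) with h0 | hpos
  · exact ⟨0, by simp [← h0]; positivity⟩
  · set ε'' : ℝ := min (ε / ‖ψ‖) ‖ψ‖ with hε''
    have hε''pos : 0 < ε'' := lt_min (div_pos hε hpos) hpos
    have hK : 0 ≤ ‖ψ‖ - ε'' := by
      have := min_le_right (ε / ‖ψ‖) ‖ψ‖; linarith
    have hex : ∃ a₀ : E, ‖a₀‖ ≤ 1 ∧ ‖ψ‖ - ε'' < ψ a₀ := by
      by_contra hcon; push_neg at hcon
      have hb : ∀ x : E, ‖ψ x‖ ≤ (‖ψ‖ - ε'') * ‖x‖ := by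
        intro x
        rcases eq_or_ne x 0 with rfl | hx
        · simp
        · have hxn : 0 < ‖x‖ := norm_pos_iff.2 hx
          set a₀ : E := ‖x‖⁻¹ • x with ha₀
          have hna : ‖a₀‖ ≤ 1 := by
            rw [ha₀, norm_smul, norm_inv, norm_norm, inv_mul_cancel₀ (ne_of_gt hxn)]
          have h1 := hcon a₀ hna
          have h2 := hcon (-a₀) (by rwa [norm_neg])
          rw [map_neg] at h2
          have habs : |ψ a₀| ≤ ‖ψ‖ - ε'' := abs_le.2 ⟨by linarith, h1⟩
          have hxa : x = ‖x‖ • a₀ := by rw [ha₀, smul_inv_smul₀ (ne_of_gt hxn)]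
          have hval : ψ x = ‖x‖ * ψ a₀ := by
            conv_lhs => rw [hxa]
            rw [map_smul, smul_eq_mul]
          calc ‖ψ x‖ = ‖x‖ * |ψ a₀| := by
                rw [hval, Real.norm_eq_abs, abs_mul, abs_of_nonneg hxn.le]
            _ ≤ ‖x‖ * (‖ψ‖ - ε'') := by
                exact mul_le_mul_of_nonneg_left habs hxn.le
            _ = (‖ψ‖ - ε'') * ‖x‖ := mul_comm _ _
      have := ψ.opNorm_le_bound hK hb
      linarith
    obtain ⟨a₀, hna, hψa⟩ := hex
    refine ⟨‖ψ‖ • a₀, ?_⟩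
    have h1 : ψ (‖ψ‖ • a₀) = ‖ψ‖ * ψ a₀ := by rw [map_smul, smul_eq_mul]
    have h2 : ‖(‖ψ‖ • a₀)‖ ≤ ‖ψ‖ := by
      rw [norm_smul, Real.norm_eq_abs, abs_of_nonneg (norm_nonneg ψ)]
      nlinarith
    have h3 : ‖ψ‖ * ψ a₀ ≥ ‖ψ‖ * (‖ψ‖ - ε'') := by
      exact mul_le_mul_of_nonneg_left hψa.le (norm_nonneg ψ)
    have h4 : ‖ψ‖ * ε'' ≤ ε := by
      have h5 : ε'' ≤ ε / ‖ψ‖ := min_le_left _ _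
      rw [le_div_iff₀ hpos] at h5
      linarith [h5]
    nlinarith [sq_nonneg ‖(‖ψ‖ • a₀)‖, h2, norm_nonneg (‖ψ‖ • a₀)]

theorem sq_combo {a b x y z : ℝ} (ha : 0 ≤ a) (hb : 0 ≤ b) (hab : a + b = 1)
    (hx : 0 ≤ x) (hy : 0 ≤ y) (hz : 0 ≤ z) (hle : z ≤ a*x + b*y) :
    z^2 ≤ a*x^2 + b*y^2 := by
  nlinarith [sq_nonneg (x - y), mul_nonneg ha hb, mul_nonneg ha hx, mul_nonneg hb hy]

set_option maxHeartbeats 1000000 in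
/-- Subgradient / dual attainment lemma via Hahn-Banach separation. -/
theorem subgrad {h : X × (X →L[ℝ] ℝ) → EReal} (hc : ConvexE h)
    (hge : ∀ p, (cpl p : EReal) ≤ h p) {t₀ : X × (X →L[ℝ] ℝ)}
    (ht₀ : h t₀ = (cpl t₀ : EReal)) (w : X × (X →L[ℝ] ℝ)) :
    ∃ (φ₁ : X →L[ℝ] ℝ) (φ₂ : (X →L[ℝ] ℝ) →L[ℝ] ℝ), ∀ p : X × (X →L[ℝ] ℝ),
      ((‖φ₁‖^2/2 + ‖φ₂‖^2/2 - (φ₁ p.1 + φ₂ p.2) : ℝ) : EReal) ≤ transl h w p := by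
  classical
  set q0 : X × (X →L[ℝ] ℝ) := (t₀.1 - w.1, t₀.2 - w.2) with hq0def
  have hq0 : transl h w q0 = (cpl q0 : EReal) := transl_at_pt t₀ w ht₀
  set bfun : X × (X →L[ℝ] ℝ) → ℝ := fun u => cpl q0 + jj (q0 + u) with hbfun
  have hbcont : Continuous bfun := by
    apply Continuous.add continuous_const
    unfold jj
    fun_prop
  set epi : Set ((X × (X →L[ℝ] ℝ)) × ℝ) :=
    {z | ∀ ε : ℝ, 0 < ε → ∃ p : X × (X →L[ℝ] ℝ),
      transl h w p + (jj (p + z.1) : EReal) < ((z.2 + ε : ℝ) : EReal)} with hepidef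
  -- convexity of epi
  have hconv : Convex ℝ epi := by
    intro z hz z' hz' a b ha hb hab
    intro ε hε
    obtain ⟨p, hp⟩ := hz ε hε
    obtain ⟨p', hp'⟩ := hz' ε hε
    have hnb : transl h w p ≠ ⊥ := ne_bot_of_coe_le (transl_ge hge w p)
    have hnb' : transl h w p' ≠ ⊥ := ne_bot_of_coe_le (transl_ge hge w p')
    have hnt : transl h w p ≠ ⊤ := by
      intro htop; rw [htop, EReal.top_add_coe] at hp; exact not_top_lt hp
    have hnt' : transl h w p' ≠ ⊤ := by
      intro htop; rw [htop, EReal.top_add_coe] at hp'; exact not_top_lt hp'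
    set A : ℝ := (transl h w p).toReal with hA
    set A' : ℝ := (transl h w p').toReal with hA'
    have hAe : transl h w p = (A : EReal) := (EReal.coe_toReal hnt hnb).symm
    have hAe' : transl h w p' = (A' : EReal) := (EReal.coe_toReal hnt' hnb').symm
    have hpr : A + jj (p + z.1) < z.2 + ε := by
      rw [hAe, ← EReal.coe_add] at hp; exact_mod_cast hp
    have hpr' : A' + jj (p' + z'.1) < z'.2 + ε := by
      rw [hAe', ← EReal.coe_add] at hp'; exact_mod_cast hp'
    refine ⟨a • p + b • p', ?_⟩
    have hcvt := convexE_transl hc hge w p p' a b ha hb hab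
    rw [hAe, hAe', ← EReal.coe_mul, ← EReal.coe_mul, ← EReal.coe_add] at hcvt
    -- convexity of jj
    have harg : (a • p + b • p') + (a • z + b • z').1 = a • (p + z.1) + b • (p' + z'.1) := by
      have h0 : (a • z + b • z').1 = a • z.1 + b • z'.1 := rfl
      rw [h0, smul_add, smul_add]
      abel
    have hjj : jj ((a • p + b • p') + (a • z + b • z').1)
        ≤ a * jj (p + z.1) + b * jj (p' + z'.1) := by
      rw [harg]
      set u := p + z.1
      set v := p' + z'.1
      have h1 : ‖(a • u + b • v).1‖ ≤ a * ‖u.1‖ + b * ‖v.1‖ := by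
        have e1 : ‖a • u.1‖ ≤ a * ‖u.1‖ := by
          simpa [Real.norm_eq_abs, abs_of_nonneg ha] using _root_.norm_smul_le a u.1
        have e2 : ‖b • v.1‖ ≤ b * ‖v.1‖ := by
          simpa [Real.norm_eq_abs, abs_of_nonneg hb] using _root_.norm_smul_le b v.1
        calc ‖(a • u + b • v).1‖ = ‖a • u.1 + b • v.1‖ := rfl
          _ ≤ ‖a • u.1‖ + ‖b • v.1‖ := norm_add_le _ _
          _ ≤ a * ‖u.1‖ + b * ‖v.1‖ := by linarith
      have h2 : ‖(a • u + b • v).2‖ ≤ a * ‖u.2‖ + b * ‖v.2‖ := by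
        have e1 : ‖a • u.2‖ ≤ a * ‖u.2‖ := by
          simpa [Real.norm_eq_abs, abs_of_nonneg ha] using _root_.norm_smul_le a u.2
        have e2 : ‖b • v.2‖ ≤ b * ‖v.2‖ := by
          simpa [Real.norm_eq_abs, abs_of_nonneg hb] using _root_.norm_smul_le b v.2
        calc ‖(a • u + b • v).2‖ = ‖a • u.2 + b • v.2‖ := rfl
          _ ≤ ‖a • u.2‖ + ‖b • v.2‖ := norm_add_le _ _
          _ ≤ a * ‖u.2‖ + b * ‖v.2‖ := by linarith
      have sq1 : ‖(a • u + b • v).1‖^2 ≤ a * ‖u.1‖^2 + b * ‖v.1‖^2 :=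
        sq_combo ha hb hab (norm_nonneg _) (norm_nonneg _) (norm_nonneg _) h1
      have sq2 : ‖(a • u + b • v).2‖^2 ≤ a * ‖u.2‖^2 + b * ‖v.2‖^2 :=
        sq_combo ha hb hab (norm_nonneg _) (norm_nonneg _) (norm_nonneg _) h2
      unfold jj; linarith
    have hcoeval : transl h w (a • p + b • p')
          + (jj ((a • p + b • p') + (a • z + b • z').1) : EReal)
        ≤ ((a * A + b * A' + (a * jj (p + z.1) + b * jj (p' + z'.1)) : ℝ) : EReal) := by
      calc transl h w (a • p + b • p') + (jj ((a • p + b • p') + (a • z + b • z').1) : EReal)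
          ≤ ((a * A + b * A' : ℝ) : EReal)
              + ((a * jj (p + z.1) + b * jj (p' + z'.1) : ℝ) : EReal) := by
            exact add_le_add hcvt (EReal.coe_le_coe_iff.2 hjj)
        _ = _ := by rw [← EReal.coe_add]
    have hfinal : a * A + b * A' + (a * jj (p + z.1) + b * jj (p' + z'.1))
        < (a • z + b • z').2 + ε := by
      have hsnd : (a • z + b • z').2 = a * z.2 + b * z'.2 := rfl
      rw [hsnd]
      rcases (by by_contra hcc; push_neg at hcc; linarith : 0 < a ∨ 0 < b) with hha | hhb
      · nlinarith [mul_le_mul_of_nonneg_left hpr'.le hb, mul_lt_mul_of_pos_left hpr hha]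
      · nlinarith [mul_le_mul_of_nonneg_left hpr.le ha, mul_lt_mul_of_pos_left hpr' hhb]
    exact lt_of_le_of_lt hcoeval (EReal.coe_lt_coe_iff.2 hfinal)
  -- the open convex subset Aset
  set Aset : Set ((X × (X →L[ℝ] ℝ)) × ℝ) := {z | bfun z.1 < z.2} with hAsetdef
  have hAopen : IsOpen Aset := by
    rw [hAsetdef]
    exact isOpen_lt (hbcont.comp continuous_fst) continuous_snd
  have hAsub : Aset ⊆ epi := by
    intro z hz ε hε
    refine ⟨q0, ?_⟩
    rw [hq0, ← EReal.coe_add]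
    refine EReal.coe_lt_coe_iff.2 ?_
    have hzz : bfun z.1 < z.2 := hz
    rw [hbfun] at hzz
    simp only at hzz ⊢
    linarith
  have hAint : Aset ⊆ interior epi := interior_maximal hAsub hAopen
  -- fattening
  have hfat : ∀ z ∈ epi, ∀ δ : ℝ, 0 < δ → (z.1, z.2 + δ) ∈ interior epi := by
    intro z hz δ hδ
    set M : ℝ := max (bfun z.1 - z.2) 0 + 1 with hM
    have hMpos : 0 < M := by positivity
    set l : ℝ := δ / (M + δ) with hl
    have hlpos : 0 < l := by rw [hl]; positivity
    have hl1 : l < 1 := by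
      rw [hl, div_lt_one (by linarith)]; linarith
    have hdl : δ / l = M + δ := by
      rw [hl]; field_simp
    have hamem : (z.1, z.2 + δ / l) ∈ Aset := by
      show bfun z.1 < z.2 + δ / l
      have h1 : bfun z.1 - z.2 < M := by
        have h2 := le_max_left (bfun z.1 - z.2) 0; rw [hM]; linarith
      rw [hdl]; linarith
    set amap : ((X × (X →L[ℝ] ℝ)) × ℝ) → ((X × (X →L[ℝ] ℝ)) × ℝ) :=
      fun x => (1 - l) • z + l • x with hamap
    have hopenmap : IsOpenMap amap := by
      have h1 : IsOpenMap (fun x : (X × (X →L[ℝ] ℝ)) × ℝ => l • x) :=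
        isOpenMap_smul₀ (ne_of_gt hlpos)
      have h2 : IsOpenMap (fun y : (X × (X →L[ℝ] ℝ)) × ℝ => (1 - l) • z + y) :=
        isOpenMap_add_left _
      exact h2.comp h1
    have himg : amap '' Aset ⊆ epi := by
      rintro _ ⟨x, hx, rfl⟩
      exact hconv hz (hAsub hx) (by linarith) hlpos.le (by ring)
    have hmem : (z.1, z.2 + δ) ∈ amap '' Aset := by
      refine ⟨(z.1, z.2 + δ / l), hamem, ?_⟩
      rw [hamap]
      have hc1 : ((1 - l) • z + l • ((z.1, z.2 + δ / l) : (X × (X →L[ℝ] ℝ)) × ℝ)).1 = z.1 := by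
        show (1 - l) • z.1 + l • z.1 = z.1
        rw [← add_smul]; ring_nf; rw [one_smul]
      have hc2 : ((1 - l) • z + l • ((z.1, z.2 + δ / l) : (X × (X →L[ℝ] ℝ)) × ℝ)).2 = z.2 + δ := by
        show (1 - l) * z.2 + l * (z.2 + δ / l) = z.2 + δ
        field_simp
        ring
      exact Prod.ext hc1 hc2
    exact interior_maximal himg (hopenmap _ hAopen) hmem
  -- the point (0,0) is not in the interior of epi
  have hx0 : ((0 : X × (X →L[ℝ] ℝ)), (0 : ℝ)) ∉ interior epi := by
    intro hmem
    obtain ⟨ε₀, hε₀, hball⟩ := Metric.mem_nhds_iff.1 (mem_interior_iff_mem_nhds.1 hmem)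
    have hin : ((0 : X × (X →L[ℝ] ℝ)), -(ε₀/2)) ∈ epi := by
      apply hball
      rw [Metric.mem_ball, Prod.dist_eq]
      have hd1 : dist (0 : X × (X →L[ℝ] ℝ)) 0 = 0 := dist_self _
      have hd2 : dist (-(ε₀/2)) (0:ℝ) = ε₀/2 := by
        rw [Real.dist_eq]; rw [abs_of_nonpos (by linarith)]; ring
      rw [hd1, hd2]
      rw [max_eq_right (by linarith)]
      linarith
    obtain ⟨p, hp⟩ := hin (ε₀/4) (by linarith)
    have hlb : ((cpl p + jj (p + (0 : X × (X →L[ℝ] ℝ))) : ℝ) : EReal)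
        ≤ transl h w p + (jj (p + (0 : X × (X →L[ℝ] ℝ))) : EReal) := by
      rw [EReal.coe_add]
      exact add_le_add_left (transl_ge hge w p) _
    have hcomb := lt_of_le_of_lt hlb hp
    have hreal : cpl p + jj (p + (0 : X × (X →L[ℝ] ℝ))) < -(ε₀/2) + ε₀/4 := by
      exact_mod_cast hcomb
    rw [add_zero] at hreal
    have := cj_nonneg p
    linarith
  -- separation
  obtain ⟨f, hf⟩ := geometric_hahn_banach_open_point (hconv.interior) isOpen_interior hx0
  have hf0 : f ((0 : X × (X →L[ℝ] ℝ)), (0:ℝ)) = 0 := by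
    have h0 : ((0 : X × (X →L[ℝ] ℝ)), (0:ℝ)) = (0 : (X × (X →L[ℝ] ℝ)) × ℝ) := rfl
    rw [h0, map_zero]
  set α : ℝ := f ((0 : X × (X →L[ℝ] ℝ)), (1:ℝ)) with hα
  have hdecomp : ∀ (u : X × (X →L[ℝ] ℝ)) (r : ℝ), f (u, r) = f (u, 0) + r * α := by
    intro u r
    have h0 : ((u, r) : (X × (X →L[ℝ] ℝ)) × ℝ)
        = (u, (0:ℝ)) + r • ((0 : X × (X →L[ℝ] ℝ)), (1:ℝ)) := by
      refine Prod.ext ?_ ?_ <;> simp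
    rw [h0, map_add, map_smul, smul_eq_mul, hα]
  have hαneg : α < 0 := by
    set R₀ : ℝ := |bfun 0| + 1 with hR₀
    have hR₀pos : 0 < R₀ := by
      have := abs_nonneg (bfun 0); rw [hR₀]; linarith
    have hmem : ((0 : X × (X →L[ℝ] ℝ)), R₀) ∈ Aset := by
      show bfun 0 < R₀
      have := le_abs_self (bfun 0); rw [hR₀]; linarith
    have hlt := hf _ (hAint hmem)
    rw [hf0, hdecomp, hf0] at hlt
    rw [zero_add] at hlt
    by_contra hα0
    push_neg at hα0
    have : 0 ≤ R₀ * α := mul_nonneg hR₀pos.le hα0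
    linarith
  set cc : ℝ := (-α)⁻¹ with hcdef
  have hcpos : 0 < cc := by rw [hcdef]; exact inv_pos.2 (by linarith)
  set F1 : (X × (X →L[ℝ] ℝ)) →L[ℝ] ℝ :=
    f.comp (ContinuousLinearMap.inl ℝ (X × (X →L[ℝ] ℝ)) ℝ) with hF1
  set φ : (X × (X →L[ℝ] ℝ)) →L[ℝ] ℝ := cc • F1 with hφ
  have hφval : ∀ u : X × (X →L[ℝ] ℝ), φ u = cc * f (u, 0) := by
    intro u
    rw [hφ, ContinuousLinearMap.smul_apply, hF1, ContinuousLinearMap.comp_apply,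
      ContinuousLinearMap.inl_apply, smul_eq_mul]
  have hkey1 : ∀ z ∈ epi, φ z.1 ≤ z.2 := by
    intro z hz
    have hstep : ∀ δ : ℝ, 0 < δ → φ z.1 ≤ z.2 + δ := by
      intro δ hδ
      have hm := hf _ (hfat z hz δ hδ)
      rw [hf0, hdecomp] at hm
      have h2 : f (z.1, 0) < (z.2 + δ) * (-α) := by nlinarith [hm]
      have hαne : α ≠ 0 := ne_of_lt hαneg
      rw [hφval]
      calc cc * f (z.1, 0) ≤ cc * ((z.2 + δ) * (-α)) :=
            mul_le_mul_of_nonneg_left h2.le hcpos.le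
        _ = z.2 + δ := by
            rw [hcdef]; field_simp
    by_contra hcc2; push_neg at hcc2
    have := hstep ((φ z.1 - z.2)/2) (by linarith)
    linarith
  have hkey2 : ∀ p u : X × (X →L[ℝ] ℝ),
      ((φ u : ℝ) : EReal) ≤ transl h w p + (jj (p + u) : EReal) := by
    intro p u
    set x : EReal := transl h w p + (jj (p + u) : EReal) with hx
    have hlb : ((cpl p + jj (p+u) : ℝ) : EReal) ≤ x := by
      rw [EReal.coe_add]; exact add_le_add_left (transl_ge hge w p) _
    have hnb : x ≠ ⊥ := ne_bot_of_coe_le hlb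
    rcases eq_or_ne x ⊤ with htop | hnt
    · rw [htop]; exact le_top
    · have hxe : x = ((x.toReal : ℝ) : EReal) := (EReal.coe_toReal hnt hnb).symm
      have hmem : ((u, x.toReal) : (X × (X →L[ℝ] ℝ)) × ℝ) ∈ epi := by
        intro ε hε
        refine ⟨p, ?_⟩
        show transl h w p + (jj (p + u) : EReal) < ((x.toReal + ε : ℝ) : EReal)
        calc transl h w p + (jj (p + u) : EReal) = x := hx.symm
          _ = ((x.toReal : ℝ) : EReal) := hxe
          _ < _ := EReal.coe_lt_coe_iff.2 (by linarith)
      have := hkey1 _ hmem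
      rw [hxe]
      exact EReal.coe_le_coe_iff.2 this
  -- split φ into components
  set φ₁ : X →L[ℝ] ℝ := φ.comp (ContinuousLinearMap.inl ℝ X (X →L[ℝ] ℝ)) with hφ₁
  set φ₂ : (X →L[ℝ] ℝ) →L[ℝ] ℝ := φ.comp (ContinuousLinearMap.inr ℝ X (X →L[ℝ] ℝ)) with hφ₂
  have hφsplit : ∀ s : X × (X →L[ℝ] ℝ), φ s = φ₁ s.1 + φ₂ s.2 := by
    intro s
    have h0 : s = ContinuousLinearMap.inl ℝ X (X →L[ℝ] ℝ) s.1
        + ContinuousLinearMap.inr ℝ X (X →L[ℝ] ℝ) s.2 := by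
      rw [ContinuousLinearMap.inl_apply, ContinuousLinearMap.inr_apply]
      exact Prod.ext (by simp) (by simp)
    conv_lhs => rw [h0]
    rw [map_add]
    rfl
  refine ⟨φ₁, φ₂, ?_⟩
  intro p
  apply ecoe_le_of_forall
  intro ε hε
  obtain ⟨a, hsup1⟩ := normsup φ₁ (half_pos hε)
  obtain ⟨b2, hsup2⟩ := normsup φ₂ (half_pos hε)
  set s : X × (X →L[ℝ] ℝ) := (a, b2) with hs
  have hφs : φ s = φ₁ a + φ₂ b2 := by rw [hφsplit]
  have hjs : jj s = ‖a‖^2/2 + ‖b2‖^2/2 := rfl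
  have hkey3 : ((φ s - jj s - φ p : ℝ) : EReal) ≤ transl h w p := by
    have h1 := hkey2 p (s - p)
    rw [map_sub] at h1
    have h2 : p + (s - p) = s := by abel
    rw [h2] at h1
    have h3 := add_le_add_left h1 ((-(jj s) : ℝ) : EReal)
    rw [← EReal.coe_add] at h3
    rw [eadd_coe_cancel] at h3
    calc ((φ s - jj s - φ p : ℝ) : EReal) = ((φ s - φ p + -(jj s) : ℝ) : EReal) := by
          norm_cast; ring
      _ ≤ transl h w p := h3
  refine le_trans (EReal.coe_le_coe_iff.2 ?_) hkey3
  rw [hφs, hjs, hφsplit p]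
  linarith [hsup1, hsup2]

set_option maxHeartbeats 1000000 in
/-- One step of the Brøndsted–Rockafellar-type iteration. -/
theorem step {h : X × (X →L[ℝ] ℝ) → EReal} (hc : ConvexE h)
    (hge : ∀ p, (cpl p : EReal) ≤ h p) {t₀ : X × (X →L[ℝ] ℝ)}
    (ht₀ : h t₀ = (cpl t₀ : EReal)) (haux : AuxCond h) (w : X × (X →L[ℝ] ℝ))
    {γ : ℝ} (hγ : 0 < γ) (hgap : egap h w ≤ (γ : EReal)) :
    ∃ v : X × (X →L[ℝ] ℝ), egap h v ≤ ((γ/4 : ℝ) : EReal) ∧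
      ‖v.1 - w.1‖ ≤ 3 * Real.sqrt γ ∧ ‖v.2 - w.2‖ ≤ 3 * Real.sqrt γ := by
  obtain ⟨φ₁, φ₂, hSG⟩ := subgrad hc hge ht₀ w
  have h0 : ((‖φ₁‖^2/2 + ‖φ₂‖^2/2 : ℝ) : EReal) ≤ egap h w := by
    have h1 := hSG 0
    rw [transl_zero] at h1
    simpa using h1
  have hKγ : ‖φ₁‖^2/2 + ‖φ₂‖^2/2 ≤ γ := by exact_mod_cast le_trans h0 hgap
  have hφ1 : ‖φ₁‖ ≤ Real.sqrt (2*γ) := by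
    have h1 : ‖φ₁‖^2 ≤ 2*γ := by nlinarith [sq_nonneg ‖φ₂‖]
    have h2 := Real.sqrt_le_sqrt h1
    rwa [Real.sqrt_sq (norm_nonneg φ₁)] at h2
  have hφ2 : ‖φ₂‖ ≤ Real.sqrt (2*γ) := by
    have h1 : ‖φ₂‖^2 ≤ 2*γ := by nlinarith [sq_nonneg ‖φ₁‖]
    have h2 := Real.sqrt_le_sqrt h1
    rwa [Real.sqrt_sq (norm_nonneg φ₂)] at h2
  obtain ⟨p, hp⟩ := aux_points haux w (by linarith : (0:ℝ) < γ/4)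
  obtain ⟨V, hV, hVc, hVj⟩ := value_extract hge hp
  have hSGp : ‖φ₁‖^2/2 + ‖φ₂‖^2/2 - (φ₁ p.1 + φ₂ p.2) ≤ V := by
    have := hSG p; rw [hV] at this; exact_mod_cast this
  have hb1 : φ₁ p.1 ≤ ‖φ₁‖ * ‖p.1‖ :=
    (le_abs_self _).trans (by simpa [Real.norm_eq_abs] using φ₁.le_opNorm p.1)
  have hb2 : φ₂ p.2 ≤ ‖φ₂‖ * ‖p.2‖ :=
    (le_abs_self _).trans (by simpa [Real.norm_eq_abs] using φ₂.le_opNorm p.2)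
  -- quadratic estimates
  have hmain : ‖φ₁‖^2/2 + ‖φ₂‖^2/2 - (‖φ₁‖*‖p.1‖ + ‖φ₂‖*‖p.2‖)
      + (‖p.1‖^2/2 + ‖p.2‖^2/2) < γ/4 := by
    unfold jj at hVj; nlinarith [hVj, hSGp, hb1, hb2]
  have hq1 : (‖p.1‖ - ‖φ₁‖)^2 ≤ γ/2 := by nlinarith [sq_nonneg (‖p.2‖ - ‖φ₂‖)]
  have hq2 : (‖p.2‖ - ‖φ₂‖)^2 ≤ γ/2 := by nlinarith [sq_nonneg (‖p.1‖ - ‖φ₁‖)]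
  have hsγ : 0 ≤ Real.sqrt γ := Real.sqrt_nonneg _
  have h2γ : Real.sqrt (2*γ) ≤ (3/2) * Real.sqrt γ := by
    have e1 : Real.sqrt (2*γ) = Real.sqrt 2 * Real.sqrt γ := Real.sqrt_mul (by norm_num) _
    have e2 : Real.sqrt 2 ≤ 3/2 := by
      rw [show (3/2 : ℝ) = Real.sqrt ((3/2)^2) from (Real.sqrt_sq (by norm_num)).symm]
      apply Real.sqrt_le_sqrt; norm_num
    rw [e1]
    exact mul_le_mul_of_nonneg_right e2 hsγ
  have hhalfγ : Real.sqrt (γ/2) ≤ Real.sqrt γ := Real.sqrt_le_sqrt (by linarith)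
  have hn1 : ‖p.1‖ ≤ 3 * Real.sqrt γ := by
    have e1 : |‖p.1‖ - ‖φ₁‖| ≤ Real.sqrt (γ/2) := by
      rw [← Real.sqrt_sq_eq_abs]
      exact Real.sqrt_le_sqrt hq1
    have e2 := (abs_le.1 e1).2
    linarith
  have hn2 : ‖p.2‖ ≤ 3 * Real.sqrt γ := by
    have e1 : |‖p.2‖ - ‖φ₂‖| ≤ Real.sqrt (γ/2) := by
      rw [← Real.sqrt_sq_eq_abs]
      exact Real.sqrt_le_sqrt hq2
    have e2 := (abs_le.1 e1).2
    linarith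
  refine ⟨(p.1 + w.1, p.2 + w.2), ?_, by simpa using hn1, by simpa using hn2⟩
  have he := transl_egap hge w p
  rw [hV] at he
  have hegap : egap h (p.1 + w.1, p.2 + w.2) = ((V - cpl p : ℝ) : EReal) := by
    have h3 : egap h (p.1 + w.1, p.2 + w.2) + (cpl p : EReal) + ((-(cpl p) : ℝ) : EReal)
        = ((V : ℝ) : EReal) + ((-(cpl p) : ℝ) : EReal) := by rw [← he]
    rw [eadd_coe_cancel, ← EReal.coe_add] at h3
    rw [h3]
    norm_cast
  rw [hegap]
  have := cj_nonneg p
  have : V - cpl p ≤ γ/4 := by linarith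
  exact_mod_cast this

set_option maxHeartbeats 1000000 in
/-- Brøndsted–Rockafellar-type reaching lemma: from a point with small gap one
reaches an actual point of `T` nearby. -/
theorem reach [CompleteSpace X] {T : Set (X × (X →L[ℝ] ℝ))} (hT : MaximalMonotone T)
    {h : X × (X →L[ℝ] ℝ) → EReal} (hc : ConvexE h) (hlsc : LowerSemicontinuous h)
    (hge : ∀ p, (cpl p : EReal) ≤ h p) (hhT : ∀ t ∈ T, h t = (cpl t : EReal))
    {t₀ : X × (X →L[ℝ] ℝ)} (ht₀ : t₀ ∈ T) (haux : AuxCond h)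
    (w₀ : X × (X →L[ℝ] ℝ)) {γ₀ : ℝ} (hγ₀ : 0 < γ₀) (h0 : egap h w₀ ≤ (γ₀ : EReal)) :
    ∃ t ∈ T, ‖t.1 - w₀.1‖ ≤ 7 * Real.sqrt γ₀ ∧ ‖t.2 - w₀.2‖ ≤ 7 * Real.sqrt γ₀ := by
  have ht₀eq : h t₀ = (cpl t₀ : EReal) := hhT t₀ ht₀
  have hstep : ∀ n : ℕ, ∀ w : X × (X →L[ℝ] ℝ), egap h w ≤ ((γ₀ / 4^n : ℝ) : EReal) →
      ∃ v : X × (X →L[ℝ] ℝ), egap h v ≤ ((γ₀ / 4^(n+1) : ℝ) : EReal) ∧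
        ‖v.1 - w.1‖ ≤ 3 * (Real.sqrt γ₀ * (1/2)^n) ∧
        ‖v.2 - w.2‖ ≤ 3 * (Real.sqrt γ₀ * (1/2)^n) := by
    intro n w hw
    have hpos : (0:ℝ) < γ₀ / 4^n := by positivity
    obtain ⟨v, h1, h2, h3⟩ := step hc hge ht₀eq haux w hpos hw
    have hsq : Real.sqrt (γ₀ / 4^n) = Real.sqrt γ₀ * (1/2)^n := by
      have e0 : γ₀ / 4^n = γ₀ * ((1/2:ℝ)^n)^2 := by
        have h4 : ((1/2:ℝ)^n)^2 = (1/4:ℝ)^n := by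
          rw [← pow_mul, mul_comm, pow_mul]; norm_num
        rw [h4, div_pow, one_pow]; ring
      rw [e0, Real.sqrt_mul hγ₀.le, Real.sqrt_sq (by positivity)]
    have e4 : γ₀ / 4^n / 4 = γ₀ / 4^(n+1) := by
      rw [pow_succ]; ring
    rw [e4] at h1
    rw [hsq] at h2 h3
    exact ⟨v, h1, h2, h3⟩
  choose! F hF1 hF2 hF3 using hstep
  set seq : ℕ → X × (X →L[ℝ] ℝ) := fun n => Nat.rec w₀ (fun k v => F k v) n with hseq
  have hseqS : ∀ n, seq (n+1) = F n (seq n) := fun n => rfl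
  have hinv : ∀ n, egap h (seq n) ≤ ((γ₀ / 4^n : ℝ) : EReal) := by
    intro n
    induction n with
    | zero => show egap h w₀ ≤ _; simpa using h0
    | succ n ih => rw [hseqS]; exact hF1 n (seq n) ih
  have hd : ∀ n, dist (seq n) (seq (n+1)) ≤ (3 * Real.sqrt γ₀) * (1/2)^n := by
    intro n
    rw [hseqS, Prod.dist_eq]
    have e2 := hF2 n (seq n) (hinv n)
    have e3 := hF3 n (seq n) (hinv n)
    apply max_le
    · rw [dist_eq_norm, norm_sub_rev]
      calc ‖(F n (seq n)).1 - (seq n).1‖ ≤ 3 * (Real.sqrt γ₀ * (1/2)^n) := e2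
        _ = (3 * Real.sqrt γ₀) * (1/2)^n := by ring
    · rw [dist_eq_norm, norm_sub_rev]
      calc ‖(F n (seq n)).2 - (seq n).2‖ ≤ 3 * (Real.sqrt γ₀ * (1/2)^n) := e3
        _ = (3 * Real.sqrt γ₀) * (1/2)^n := by ring
  have hcauchy : CauchySeq seq := cauchySeq_of_le_geometric (1/2) (3 * Real.sqrt γ₀)
    (by norm_num) hd
  obtain ⟨tl, hlim⟩ := cauchySeq_tendsto_of_complete hcauchy
  have hdist : dist (seq 0) tl ≤ (3 * Real.sqrt γ₀) / (1 - 1/2) :=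
    dist_le_of_le_geometric_of_tendsto₀ (1/2) (3 * Real.sqrt γ₀) (by norm_num) hd hlim
  have hdist6 : dist w₀ tl ≤ 6 * Real.sqrt γ₀ := by
    have : (3 * Real.sqrt γ₀) / (1 - 1/2) = 6 * Real.sqrt γ₀ := by ring
    rw [this] at hdist
    exact hdist
  -- continuity of cpl
  have hcplcont : Continuous (cpl : X × (X →L[ℝ] ℝ) → ℝ) := by
    have h1 : Continuous fun q : (X →L[ℝ] ℝ) × X => q.1 q.2 :=
      isBoundedBilinearMap_apply.continuous
    exact h1.comp continuous_swap
  -- h tl ≤ cpl tl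
  have hle : h tl ≤ (cpl tl : EReal) := by
    by_contra hgt
    push_neg at hgt
    obtain ⟨y, hy1, hy2⟩ := EReal.lt_iff_exists_real_btwn.1 hgt
    have hy1' : cpl tl < y := by exact_mod_cast hy1
    have hev1 : ∀ᶠ n in Filter.atTop, (y : EReal) < h (seq n) :=
      hlim.eventually ((hlsc tl) (y : EReal) hy2)
    have hub : ∀ n, h (seq n) ≤ ((γ₀/4^n + cpl (seq n) : ℝ) : EReal) := by
      intro n
      have := hinv n
      rw [egap] at this
      have h2 := add_le_add_left this ((cpl (seq n) : ℝ) : EReal)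
      rw [sub_eq_add_neg, ← EReal.coe_neg, add_assoc, ← EReal.coe_add, neg_add_cancel,
        EReal.coe_zero, add_zero, ← EReal.coe_add] at h2
      exact h2
    have hev2 : ∀ᶠ n in Filter.atTop, y < γ₀/4^n + cpl (seq n) := by
      filter_upwards [hev1] with n hn
      have := lt_of_lt_of_le hn (hub n)
      exact_mod_cast this
    have hlim2 : Filter.Tendsto (fun n => γ₀/4^n + cpl (seq n)) Filter.atTop
        (nhds (0 + cpl tl)) := by
      apply Filter.Tendsto.add
      · have e0 : (fun n : ℕ => γ₀/4^n) = fun n : ℕ => γ₀ * (1/4:ℝ)^n := by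
          funext n; rw [one_div_pow, div_eq_mul_one_div]
        rw [e0, show (0:ℝ) = γ₀ * 0 by ring]
        exact (tendsto_pow_atTop_nhds_zero_of_lt_one (by norm_num) (by norm_num)).const_mul γ₀
      · exact (hcplcont.continuousAt.tendsto).comp hlim
    have : y ≤ 0 + cpl tl := ge_of_tendsto hlim2 (hev2.mono fun n hn => hn.le)
    rw [zero_add] at this
    linarith
  have heq : h tl = (cpl tl : EReal) := le_antisymm hle (hge tl)
  have htlT : tl ∈ T := by
    -- monotone relatedness and maximality
    have hmono : MonotoneSet (insert tl T) := by
      intro p hp q hq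
      rcases hp with rfl | hpT <;> rcases hq with rfl | hqT
      · simp
      · exact rel_of_eq hc hge heq (hhT q hqT)
      · have h1 := rel_of_eq hc hge heq (hhT p hpT)
        simp only [ContinuousLinearMap.sub_apply, map_sub] at h1 ⊢
        linarith
      · exact hT.1 p hpT q hqT
    have heq2 := hT.2 _ hmono (Set.subset_insert _ _)
    rw [← heq2]; exact Set.mem_insert _ _
  refine ⟨tl, htlT, ?_, ?_⟩
  · have h1 : dist tl.1 w₀.1 ≤ dist tl w₀ := le_max_left _ _
    rw [dist_eq_norm] at h1
    have h2 : dist tl w₀ = dist w₀ tl := dist_comm _ _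
    have hs := Real.sqrt_nonneg γ₀
    calc ‖tl.1 - w₀.1‖ ≤ dist tl w₀ := h1
      _ ≤ 6 * Real.sqrt γ₀ := by rw [h2]; exact hdist6
      _ ≤ 7 * Real.sqrt γ₀ := by linarith
  · have h1 : dist tl.2 w₀.2 ≤ dist tl w₀ := le_max_right _ _
    rw [dist_eq_norm] at h1
    have h2 : dist tl w₀ = dist w₀ tl := dist_comm _ _
    have hs := Real.sqrt_nonneg γ₀
    calc ‖tl.2 - w₀.2‖ ≤ dist tl w₀ := h1
      _ ≤ 6 * Real.sqrt γ₀ := by rw [h2]; exact hdist6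
      _ ≤ 7 * Real.sqrt γ₀ := by linarith


end Stmt8Helpers

open Stmt8Helpers in
set_option maxHeartbeats 1000000 in
theorem stmt_8 {X : Type*} [NormedAddCommGroup X] [NormedSpace ℝ X] [CompleteSpace X]
    (T : Set (X × (X →L[ℝ] ℝ))) (hT : MaximalMonotone T)
    (h : X × (X →L[ℝ] ℝ) → EReal) (hh : h ∈ FitzFamily T) (haux : AuxCond h) :
    ∀ g ∈ FitzFamily T, AuxCond g := by
  obtain ⟨hcv, hlsc, hge0, hTeq⟩ := hh
  have hge : ∀ p, (cpl p : EReal) ≤ h p := hge0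
  have hhT : ∀ t ∈ T, h t = (cpl t : EReal) := hTeq
  obtain ⟨t₀, ht₀⟩ := T_nonempty hT
  intro g hg
  obtain ⟨hgcv, hglsc, hgge0, hgTeq⟩ := hg
  have hgge : ∀ p, (cpl p : EReal) ≤ g p := hgge0
  intro wb
  apply le_antisymm
  · -- inf ≤ 0
    apply ele_zero_of_forall
    intro ε hε
    -- subgradient at wb
    obtain ⟨φ₁, φ₂, hSG⟩ := subgrad hcv hge (hhT t₀ ht₀) wb
    set R : ℝ := ‖φ₁‖ + ‖φ₂‖ with hR
    have hRnn : 0 ≤ R := by rw [hR]; positivity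
    set δ : ℝ := min 1 (ε / (200 * (R + 1))) with hδdef
    have hδpos : 0 < δ := lt_min one_pos (by positivity)
    have hδ1 : δ ≤ 1 := min_le_left _ _
    have hδε : 200 * (R + 1) * δ ≤ ε := by
      have h2 : (0:ℝ) < 200 * (R + 1) := by positivity
      have h1 : δ ≤ ε / (200 * (R + 1)) := min_le_right _ _
      rw [le_div_iff₀ h2] at h1
      linarith
    obtain ⟨p, hp⟩ := aux_points haux wb (by positivity : (0:ℝ) < δ^2)
    obtain ⟨V, hV, hVc, hVj⟩ := value_extract hge hp
    have hSGp : ‖φ₁‖^2/2 + ‖φ₂‖^2/2 - (φ₁ p.1 + φ₂ p.2) ≤ V := by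
      have := hSG p; rw [hV] at this; exact_mod_cast this
    have hb1 : φ₁ p.1 ≤ ‖φ₁‖ * ‖p.1‖ :=
      (le_abs_self _).trans (by simpa [Real.norm_eq_abs] using φ₁.le_opNorm p.1)
    have hb2 : φ₂ p.2 ≤ ‖φ₂‖ * ‖p.2‖ :=
      (le_abs_self _).trans (by simpa [Real.norm_eq_abs] using φ₂.le_opNorm p.2)
    have hmain : ‖φ₁‖^2/2 + ‖φ₂‖^2/2 - (‖φ₁‖*‖p.1‖ + ‖φ₂‖*‖p.2‖)
        + (‖p.1‖^2/2 + ‖p.2‖^2/2) < δ^2 := by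
      unfold jj at hVj; nlinarith [hVj, hSGp, hb1, hb2]
    have hq1 : (‖p.1‖ - ‖φ₁‖)^2 ≤ 2*δ^2 := by nlinarith [sq_nonneg (‖p.2‖ - ‖φ₂‖)]
    have hq2 : (‖p.2‖ - ‖φ₂‖)^2 ≤ 2*δ^2 := by nlinarith [sq_nonneg (‖p.1‖ - ‖φ₁‖)]
    have hn1 : ‖p.1‖ ≤ ‖φ₁‖ + 2*δ := by nlinarith [sq_nonneg (‖p.1‖ - ‖φ₁‖ - 2*δ), hδpos]
    have hn2 : ‖p.2‖ ≤ ‖φ₂‖ + 2*δ := by nlinarith [sq_nonneg (‖p.2‖ - ‖φ₂‖ - 2*δ), hδpos]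
    have hn1' : ‖p.1‖ ≤ R + 2 := by
      have : ‖φ₁‖ ≤ R := by rw [hR]; linarith [norm_nonneg φ₂]
      linarith
    have hn2' : ‖p.2‖ ≤ R + 2 := by
      have : ‖φ₂‖ ≤ R := by rw [hR]; linarith [norm_nonneg φ₁]
      linarith
    have hcpj : cpl p + jj p < δ^2 := by
      have := cj_nonneg p; unfold jj at hVj ⊢; linarith [hVc, hVj]
    -- gap at v
    have he := transl_egap hge wb p
    rw [hV] at he
    have hegap : egap h (p.1 + wb.1, p.2 + wb.2) = ((V - cpl p : ℝ) : EReal) := by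
      have h3 : egap h (p.1 + wb.1, p.2 + wb.2) + (cpl p : EReal) + ((-(cpl p) : ℝ) : EReal)
          = ((V : ℝ) : EReal) + ((-(cpl p) : ℝ) : EReal) := by rw [← he]
      rw [eadd_coe_cancel, ← EReal.coe_add] at h3
      rw [h3]; norm_cast
    have hgapb : egap h (p.1 + wb.1, p.2 + wb.2) ≤ ((δ^2 : ℝ) : EReal) := by
      rw [hegap]
      have h4 := cj_nonneg p
      have h5 : V - cpl p ≤ δ^2 := by linarith [hVj, h4]
      exact_mod_cast h5
    obtain ⟨t, htT, ht1, ht2⟩ := reach hT hcv hlsc hge hhT ht₀ haux _ (by positivity) hgapb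
    rw [Real.sqrt_sq hδpos.le] at ht1 ht2
    -- distances from p
    have hs1 : ‖(t.1 - wb.1) - p.1‖ ≤ 7*δ := by
      have e0 : (t.1 - wb.1) - p.1 = t.1 - (p.1 + wb.1) := by abel
      rw [e0]; exact ht1
    have hs2 : ‖(t.2 - wb.2) - p.2‖ ≤ 7*δ := by
      have e0 : (t.2 - wb.2) - p.2 = t.2 - (p.2 + wb.2) := by abel
      rw [e0]; exact ht2
    set s : X × (X →L[ℝ] ℝ) := (t.1 - wb.1, t.2 - wb.2) with hs
    have hsn1 : ‖s.1‖ ≤ R + 2 + 7*δ := by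
      calc ‖s.1‖ = ‖p.1 + (s.1 - p.1)‖ := by rw [add_sub_cancel]
        _ ≤ ‖p.1‖ + ‖s.1 - p.1‖ := norm_add_le _ _
        _ ≤ R + 2 + 7*δ := by exact add_le_add hn1' hs1
    have hsn2 : ‖s.2‖ ≤ R + 2 + 7*δ := by
      calc ‖s.2‖ = ‖p.2 + (s.2 - p.2)‖ := by rw [add_sub_cancel]
        _ ≤ ‖p.2‖ + ‖s.2 - p.2‖ := norm_add_le _ _
        _ ≤ R + 2 + 7*δ := by exact add_le_add hn2' hs2
    -- coupling estimate
    have hcid : cpl s = (s.2 - p.2) s.1 + p.2 (s.1 - p.1) + cpl p := by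
      simp only [cpl, ContinuousLinearMap.sub_apply, map_sub]
      ring
    have hcb1 : |(s.2 - p.2) s.1| ≤ ‖s.2 - p.2‖ * ‖s.1‖ := by
      simpa [Real.norm_eq_abs] using (s.2 - p.2).le_opNorm s.1
    have hcb2 : |p.2 (s.1 - p.1)| ≤ ‖p.2‖ * ‖s.1 - p.1‖ := by
      simpa [Real.norm_eq_abs] using p.2.le_opNorm (s.1 - p.1)
    have hcpls : cpl s ≤ cpl p + (7*δ) * (R + 2 + 7*δ) + (R + 2) * (7*δ) := by
      have e1 : (s.2 - p.2) s.1 ≤ (7*δ) * (R + 2 + 7*δ) := by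
        have := (abs_le.1 hcb1).2
        have hm : ‖s.2 - p.2‖ * ‖s.1‖ ≤ (7*δ) * (R + 2 + 7*δ) := by
          apply mul_le_mul hs2 hsn1 (norm_nonneg _) (by linarith)
        linarith
      have e2 : p.2 (s.1 - p.1) ≤ (R + 2) * (7*δ) := by
        have := (abs_le.1 hcb2).2
        have hm : ‖p.2‖ * ‖s.1 - p.1‖ ≤ (R + 2) * (7*δ) := by
          apply mul_le_mul hn2' hs1 (norm_nonneg _) (by linarith)
        linarith
      rw [hcid]; linarith
    -- quadratic estimates
    have hjs1 : ‖s.1‖^2/2 ≤ ‖p.1‖^2/2 + (7*δ) * (R + 2) + 49*δ^2/2 := by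
      have e1 : ‖s.1‖ ≤ ‖p.1‖ + 7*δ := by
        calc ‖s.1‖ = ‖p.1 + (s.1 - p.1)‖ := by rw [add_sub_cancel]
          _ ≤ ‖p.1‖ + ‖s.1 - p.1‖ := norm_add_le _ _
          _ ≤ ‖p.1‖ + 7*δ := by linarith
      nlinarith [norm_nonneg s.1, norm_nonneg p.1, hn1', hδpos.le, mul_self_le_mul_self
        (norm_nonneg s.1) e1]
    have hjs2 : ‖s.2‖^2/2 ≤ ‖p.2‖^2/2 + (7*δ) * (R + 2) + 49*δ^2/2 := by
      have e1 : ‖s.2‖ ≤ ‖p.2‖ + 7*δ := by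
        calc ‖s.2‖ = ‖p.2 + (s.2 - p.2)‖ := by rw [add_sub_cancel]
          _ ≤ ‖p.2‖ + ‖s.2 - p.2‖ := norm_add_le _ _
          _ ≤ ‖p.2‖ + 7*δ := by linarith
      nlinarith [norm_nonneg s.2, norm_nonneg p.2, hn2', hδpos.le, mul_self_le_mul_self
        (norm_nonneg s.2) e1]
    have hfinal : cpl s + jj s ≤ ε := by
      unfold jj
      unfold jj at hcpj
      nlinarith [hcpls, hjs1, hjs2, hcpj, hδ1, hδpos.le, hδε, hRnn]
    -- conclude
    have hvals : transl g wb s = (cpl s : EReal) := transl_at_pt t wb (hgTeq t htT)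
    calc (⨅ p : X × (X →L[ℝ] ℝ),
        (transl g wb p + ((‖p.1‖ ^ 2 / 2 + ‖p.2‖ ^ 2 / 2 : ℝ) : EReal)))
        ≤ transl g wb s + ((‖s.1‖ ^ 2 / 2 + ‖s.2‖ ^ 2 / 2 : ℝ) : EReal) := iInf_le _ _
      _ = ((cpl s + jj s : ℝ) : EReal) := by rw [hvals, ← EReal.coe_add]; rfl
      _ ≤ (ε : EReal) := EReal.coe_le_coe_iff.2 hfinal
  · -- 0 ≤ inf
    refine le_iInf fun p => ?_
    have h1 : (cpl p : EReal) ≤ transl g wb p := transl_ge hgge wb p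
    have h2 : ((cpl p + jj p : ℝ) : EReal)
        ≤ transl g wb p + ((‖p.1‖ ^ 2 / 2 + ‖p.2‖ ^ 2 / 2 : ℝ) : EReal) := by
      rw [EReal.coe_add]
      exact add_le_add_left h1 _
    have h3 : (0 : EReal) ≤ ((cpl p + jj p : ℝ) : EReal) := by
      exact_mod_cast cj_nonneg p
    exact h3.trans h2


end
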